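/- arXiv:2208.03672 — 7 statements merged into one kernel-verified Lean document; each statement's English description precedes it below -/
import Mathlib

section
/- For fixed μ>0, ρ>0, define h(t) = −ρμ ln s(t) + z(t)²/2, where s(t) = (sqrt(t²+4ρμ) − t)/2 and z(t) = (sqrt(t²+4ρμ) + t)/2. Then h is twice continuously differentiable with h'(t) = z(t) and h''(t) = z(t)/(s(t)+z(t)) ∈ (0,1). In particular h is strictly convex and its second derivative is bounded above by 1. -/
noncomputable def sbal_s (μ ρ t : ℝ) : ℝ := (Real.sqrt (t ^ 2 + 4 * ρ * μ) - t) / 2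
noncomputable def sbal_z (μ ρ t : ℝ) : ℝ := (Real.sqrt (t ^ 2 + 4 * ρ * μ) + t) / 2
noncomputable def sbal_h (μ ρ t : ℝ) : ℝ :=
  -(ρ * μ) * Real.log (sbal_s μ ρ t) + (sbal_z μ ρ t) ^ 2 / 2

theorem stmt3 (μ ρ : ℝ) (hμ : 0 < μ) (hρ : 0 < ρ) :
    ContDiff ℝ 2 (sbal_h μ ρ) ∧
    (∀ t : ℝ, HasDerivAt (sbal_h μ ρ) (sbal_z μ ρ t) t) ∧
    (∀ t : ℝ, HasDerivAt (deriv (sbal_h μ ρ))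
      (sbal_z μ ρ t / (sbal_s μ ρ t + sbal_z μ ρ t)) t) ∧
    (∀ t : ℝ, sbal_z μ ρ t / (sbal_s μ ρ t + sbal_z μ ρ t) ∈ Set.Ioo (0 : ℝ) 1) ∧
    StrictConvexOn ℝ Set.univ (sbal_h μ ρ) := by
  have hpos : ∀ t : ℝ, (0:ℝ) < t ^ 2 + 4 * ρ * μ := fun t => by positivity
  have hqlt : ∀ t : ℝ, |t| < Real.sqrt (t ^ 2 + 4 * ρ * μ) := by
    intro t
    rw [← Real.sqrt_sq_eq_abs]
    exact Real.sqrt_lt_sqrt (sq_nonneg t) (by nlinarith)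
  have hqpos : ∀ t : ℝ, (0:ℝ) < Real.sqrt (t ^ 2 + 4 * ρ * μ) := fun t =>
    lt_of_le_of_lt (abs_nonneg t) (hqlt t)
  have hspos : ∀ t : ℝ, 0 < sbal_s μ ρ t := by
    intro t
    have := hqlt t
    have := le_abs_self t
    unfold sbal_s; linarith
  have hzpos : ∀ t : ℝ, 0 < sbal_z μ ρ t := by
    intro t
    have := hqlt t
    have := neg_abs_le t
    unfold sbal_z; linarith
  have hq2 : ∀ t : ℝ, (Real.sqrt (t ^ 2 + 4 * ρ * μ)) ^ 2 = t ^ 2 + 4 * ρ * μ :=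
    fun t => Real.sq_sqrt (hpos t).le
  -- derivative of sqrt part
  have hqd : ∀ t : ℝ, HasDerivAt (fun t : ℝ => Real.sqrt (t ^ 2 + 4 * ρ * μ))
      (t / Real.sqrt (t ^ 2 + 4 * ρ * μ)) t := by
    intro t
    have h1 : HasDerivAt (fun t : ℝ => t ^ 2 + 4 * ρ * μ) (2 * t) t := by
      simpa using (hasDerivAt_pow 2 t).add_const (4 * ρ * μ)
    have h2 := (Real.hasDerivAt_sqrt (ne_of_gt (hpos t))).comp t h1
    refine (h2.congr_deriv ?_ : _)
    have hne : Real.sqrt (t ^ 2 + 4 * ρ * μ) ≠ 0 := (hqpos t).ne'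
    field_simp
  have hsd : ∀ t : ℝ, HasDerivAt (sbal_s μ ρ)
      ((t / Real.sqrt (t ^ 2 + 4 * ρ * μ) - 1) / 2) t := by
    intro t
    exact ((hqd t).sub (hasDerivAt_id t)).div_const 2
  have hzd : ∀ t : ℝ, HasDerivAt (sbal_z μ ρ)
      ((t / Real.sqrt (t ^ 2 + 4 * ρ * μ) + 1) / 2) t := by
    intro t
    exact ((hqd t).add (hasDerivAt_id t)).div_const 2
  -- h' = z
  have hd : ∀ t : ℝ, HasDerivAt (sbal_h μ ρ) (sbal_z μ ρ t) t := by
    intro t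
    have h1 := (((hsd t).log (hspos t).ne').const_mul (-(ρ * μ))).add
      (((hzd t).pow 2).div_const 2)
    refine h1.congr_deriv ?_
    have hsne : sbal_s μ ρ t ≠ 0 := (hspos t).ne'
    have hqne : Real.sqrt (t ^ 2 + 4 * ρ * μ) ≠ 0 := (hqpos t).ne'
    have h2 := hq2 t
    have hsne' : Real.sqrt (t ^ 2 + 4 * ρ * μ) - t ≠ 0 := by
      have := hqlt t; have := le_abs_self t; intro h; nlinarith
    unfold sbal_s sbal_z at *
    have key : (t / Real.sqrt (t ^ 2 + 4 * ρ * μ) - 1) / 2 /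
        ((Real.sqrt (t ^ 2 + 4 * ρ * μ) - t) / 2) = -1 / Real.sqrt (t ^ 2 + 4 * ρ * μ) := by
      field_simp
      ring
    rw [key]
    norm_num
    field_simp
    rw [show ρ * μ * 4 = 4 * ρ * μ by ring]
    linear_combination (-1) * h2
  -- z' = z/(s+z)
  have hzd' : ∀ t : ℝ, HasDerivAt (sbal_z μ ρ)
      (sbal_z μ ρ t / (sbal_s μ ρ t + sbal_z μ ρ t)) t := by
    intro t
    have h1 := hzd t
    convert h1 using 1
    have hqne : Real.sqrt (t ^ 2 + 4 * ρ * μ) ≠ 0 := (hqpos t).ne'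
    unfold sbal_s sbal_z
    have : (Real.sqrt (t ^ 2 + 4 * ρ * μ) - t) / 2 +
        (Real.sqrt (t ^ 2 + 4 * ρ * μ) + t) / 2 = Real.sqrt (t ^ 2 + 4 * ρ * μ) := by ring
    rw [this]
    field_simp
    ring
  have hderiv : deriv (sbal_h μ ρ) = sbal_z μ ρ := funext fun t => (hd t).deriv
  have hd2 : ∀ t : ℝ, HasDerivAt (deriv (sbal_h μ ρ))
      (sbal_z μ ρ t / (sbal_s μ ρ t + sbal_z μ ρ t)) t := by
    rw [hderiv]; exact hzd'
  have hioo : ∀ t : ℝ, sbal_z μ ρ t / (sbal_s μ ρ t + sbal_z μ ρ t) ∈ Set.Ioo (0:ℝ) 1 := by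
    intro t
    have hs := hspos t
    have hz := hzpos t
    constructor
    · positivity
    · rw [div_lt_one (by linarith)]; linarith
  -- ContDiff
  have hqc : ContDiff ℝ 2 (fun t : ℝ => Real.sqrt (t ^ 2 + 4 * ρ * μ)) := by
    rw [contDiff_iff_contDiffAt]
    intro t
    exact (Real.contDiffAt_sqrt (hpos t).ne').comp t
      (((contDiff_id.pow 2).add contDiff_const).contDiffAt)
  have hsc : ContDiff ℝ 2 (sbal_s μ ρ) := (hqc.sub contDiff_id).div_const 2
  have hzc : ContDiff ℝ 2 (sbal_z μ ρ) := (hqc.add contDiff_id).div_const 2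
  have hhc : ContDiff ℝ 2 (sbal_h μ ρ) := by
    have hlog : ContDiff ℝ 2 (fun t => Real.log (sbal_s μ ρ t)) := by
      rw [contDiff_iff_contDiffAt]
      intro t
      exact (Real.contDiffAt_log.2 (hspos t).ne').comp t hsc.contDiffAt
    exact ((contDiff_const (c := -(ρ * μ))).mul hlog).add ((hzc.pow 2).div_const 2)
  -- strict convexity
  have hconv : StrictConvexOn ℝ Set.univ (sbal_h μ ρ) := by
    apply StrictMono.strictConvexOn_univ_of_deriv hhc.continuous
    rw [hderiv]
    apply strictMono_of_deriv_pos
    intro t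
    rw [(hzd' t).deriv]
    exact (hioo t).1
  exact ⟨hhc, hd, hd2, hioo, hconv⟩
end

section
/- Let A ∈ ℝ^{m×n}, b ∈ ℝ^m, c ∈ ℝ^n, μ>0, ρ>0, x ∈ ℝ^n. Define the SBAL function L(y) = −ρ b^T y + Σ_{i=1}^n h(ρ x_i − c_i + A_i^T y), where h(t) = −ρμ ln s(t) + z(t)²/2 with s(t) = (sqrt(t²+4ρμ)−t)/2, z(t) = (sqrt(t²+4ρμ)+t)/2, and A_i is the i-th column of A. Then L is convex on ℝ^m, with gradient ∇L(y) = A z(y) − ρ b where z(y)_i = z(ρ x_i − c_i + A_i^T y). -/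
open Matrix

section aux

variable {μ ρ : ℝ} (hμ : 0 < μ) (hρ : 0 < ρ)

lemma sbal_abs_lt (hμ : 0 < μ) (hρ : 0 < ρ) (t : ℝ) :
    |t| < Real.sqrt (t ^ 2 + 4 * ρ * μ) := by
  have h4 : 0 < 4 * ρ * μ := by positivity
  calc |t| = Real.sqrt (t ^ 2) := by rw [Real.sqrt_sq_eq_abs]
    _ < Real.sqrt (t ^ 2 + 4 * ρ * μ) := Real.sqrt_lt_sqrt (sq_nonneg t) (by linarith)

lemma sbal_s_pos (hμ : 0 < μ) (hρ : 0 < ρ) (t : ℝ) : 0 < sbal_s μ ρ t := by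
  have := sbal_abs_lt hμ hρ t
  have h1 : t ≤ |t| := le_abs_self t
  unfold sbal_s; linarith

lemma sbal_z_pos (hμ : 0 < μ) (hρ : 0 < ρ) (t : ℝ) : 0 < sbal_z μ ρ t := by
  have := sbal_abs_lt hμ hρ t
  have h1 : -t ≤ |t| := neg_le_abs t
  unfold sbal_z; linarith

lemma sbal_sqrt_hasDerivAt (hμ : 0 < μ) (hρ : 0 < ρ) (t : ℝ) :
    HasDerivAt (fun t => Real.sqrt (t ^ 2 + 4 * ρ * μ))
      (t / Real.sqrt (t ^ 2 + 4 * ρ * μ)) t := by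
  have hpos : 0 < t ^ 2 + 4 * ρ * μ := by positivity
  have hq : 0 < Real.sqrt (t ^ 2 + 4 * ρ * μ) := Real.sqrt_pos.2 hpos
  have h1 : HasDerivAt (fun t : ℝ => t ^ 2 + 4 * ρ * μ) (2 * t) t := by
    simpa using (hasDerivAt_pow 2 t).add_const (4 * ρ * μ)
  have h2 := (Real.hasDerivAt_sqrt (ne_of_gt hpos)).comp t h1
  refine h2.congr_deriv (Eq.symm ?_)
  field_simp

lemma sbal_z_hasDerivAt (hμ : 0 < μ) (hρ : 0 < ρ) (t : ℝ) :
    HasDerivAt (sbal_z μ ρ) (sbal_z μ ρ t / Real.sqrt (t ^ 2 + 4 * ρ * μ)) t := by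
  have hpos : 0 < t ^ 2 + 4 * ρ * μ := by positivity
  have hq : 0 < Real.sqrt (t ^ 2 + 4 * ρ * μ) := Real.sqrt_pos.2 hpos
  have h := ((sbal_sqrt_hasDerivAt hμ hρ t).add (hasDerivAt_id t)).div_const 2
  refine h.congr_deriv (Eq.symm ?_)
  unfold sbal_z
  field_simp
  ring

lemma sbal_s_hasDerivAt (hμ : 0 < μ) (hρ : 0 < ρ) (t : ℝ) :
    HasDerivAt (sbal_s μ ρ) (-(sbal_s μ ρ t) / Real.sqrt (t ^ 2 + 4 * ρ * μ)) t := by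
  have hpos : 0 < t ^ 2 + 4 * ρ * μ := by positivity
  have hq : 0 < Real.sqrt (t ^ 2 + 4 * ρ * μ) := Real.sqrt_pos.2 hpos
  have h := ((sbal_sqrt_hasDerivAt hμ hρ t).sub (hasDerivAt_id t)).div_const 2
  refine h.congr_deriv (Eq.symm ?_)
  unfold sbal_s
  rw [neg_div, div_div, eq_div_iff (by positivity)]
  field_simp
  ring

lemma sbal_h_hasDerivAt (hμ : 0 < μ) (hρ : 0 < ρ) (t : ℝ) :
    HasDerivAt (sbal_h μ ρ) (sbal_z μ ρ t) t := by
  have hpos : 0 < t ^ 2 + 4 * ρ * μ := by positivity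
  have hq : 0 < Real.sqrt (t ^ 2 + 4 * ρ * μ) := Real.sqrt_pos.2 hpos
  have hq2 : Real.sqrt (t ^ 2 + 4 * ρ * μ) ^ 2 = t ^ 2 + 4 * ρ * μ :=
    Real.sq_sqrt hpos.le
  have hs := sbal_s_pos hμ hρ t
  have hz := sbal_z_pos hμ hρ t
  have h1 : HasDerivAt (fun t => Real.log (sbal_s μ ρ t))
      ((-(sbal_s μ ρ t) / Real.sqrt (t ^ 2 + 4 * ρ * μ)) / sbal_s μ ρ t) t :=
    (sbal_s_hasDerivAt hμ hρ t).log (ne_of_gt hs)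
  have h2 : HasDerivAt (fun t => (sbal_z μ ρ t) ^ 2 / 2)
      ((2 * sbal_z μ ρ t ^ 1 * (sbal_z μ ρ t / Real.sqrt (t ^ 2 + 4 * ρ * μ))) / 2) t :=
    ((sbal_z_hasDerivAt hμ hρ t).pow 2).div_const 2
  have h := (h1.const_mul (-(ρ * μ))).add h2
  have harg : sbal_h μ ρ = fun t =>
      -(ρ * μ) * Real.log (sbal_s μ ρ t) + (sbal_z μ ρ t) ^ 2 / 2 := rfl
  rw [harg]
  refine h.congr_deriv (Eq.symm ?_)
  have key : sbal_s μ ρ t * sbal_z μ ρ t = ρ * μ := by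
    unfold sbal_s sbal_z
    nlinarith [hq2]
  have hs' : sbal_s μ ρ t = Real.sqrt (t ^ 2 + 4 * ρ * μ) - sbal_z μ ρ t := by
    unfold sbal_s sbal_z; ring
  have hzq : sbal_z μ ρ t * Real.sqrt (t ^ 2 + 4 * ρ * μ) = ρ * μ + sbal_z μ ρ t ^ 2 := by
    linear_combination key - sbal_z μ ρ t * hs'
  have hrhs : -(ρ * μ) * (-sbal_s μ ρ t / Real.sqrt (t ^ 2 + 4 * ρ * μ) / sbal_s μ ρ t)
      + 2 * sbal_z μ ρ t ^ 1 * (sbal_z μ ρ t / Real.sqrt (t ^ 2 + 4 * ρ * μ)) / 2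
      = (ρ * μ + sbal_z μ ρ t ^ 2) / Real.sqrt (t ^ 2 + 4 * ρ * μ) := by
    field_simp
  rw [hrhs, ← hzq, mul_div_assoc, div_self (ne_of_gt hq), mul_one]

lemma sbal_z_mono (hμ : 0 < μ) (hρ : 0 < ρ) : StrictMono (sbal_z μ ρ) := by
  apply strictMono_of_hasDerivAt_pos (f' := fun t => sbal_z μ ρ t / Real.sqrt (t ^ 2 + 4 * ρ * μ))
    (fun t => sbal_z_hasDerivAt hμ hρ t)
  intro t
  have hpos : 0 < t ^ 2 + 4 * ρ * μ := by positivity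
  exact div_pos (sbal_z_pos hμ hρ t) (Real.sqrt_pos.2 hpos)

lemma sbal_h_convex (hμ : 0 < μ) (hρ : 0 < ρ) : ConvexOn ℝ Set.univ (sbal_h μ ρ) := by
  have hdiff : Differentiable ℝ (sbal_h μ ρ) :=
    fun t => (sbal_h_hasDerivAt hμ hρ t).differentiableAt
  apply Monotone.convexOn_univ_of_deriv hdiff
  have : deriv (sbal_h μ ρ) = sbal_z μ ρ := by
    funext t; exact (sbal_h_hasDerivAt hμ hρ t).deriv
  rw [this]
  exact (sbal_z_mono hμ hρ).monotone

end aux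

theorem stmt4 {m n : ℕ} (A : Matrix (Fin m) (Fin n) ℝ) (b : Fin m → ℝ) (c x : Fin n → ℝ)
    (μ ρ : ℝ) (hμ : 0 < μ) (hρ : 0 < ρ)
    (L : (Fin m → ℝ) → ℝ)
    (hL : ∀ y, L y = -(ρ * (b ⬝ᵥ y)) + ∑ j, sbal_h μ ρ (ρ * x j - c j + (Aᵀ *ᵥ y) j)) :
    ConvexOn ℝ Set.univ L ∧
    ∀ y v : Fin m → ℝ,
      HasDerivAt (fun τ : ℝ => L (y + τ • v))
        ((A *ᵥ (fun j => sbal_z μ ρ (ρ * x j - c j + (Aᵀ *ᵥ y) j)) - ρ • b) ⬝ᵥ v) 0 := by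
  have hconv := sbal_h_convex hμ hρ
  constructor
  · refine ⟨convex_univ, ?_⟩
    intro y1 _ y2 _ a b' ha hb hab
    simp only [smul_eq_mul, hL]
    have key : ∀ j, sbal_h μ ρ (ρ * x j - c j + (Aᵀ *ᵥ (a • y1 + b' • y2)) j)
        ≤ a * sbal_h μ ρ (ρ * x j - c j + (Aᵀ *ᵥ y1) j)
          + b' * sbal_h μ ρ (ρ * x j - c j + (Aᵀ *ᵥ y2) j) := by
      intro j
      have harg : ρ * x j - c j + (Aᵀ *ᵥ (a • y1 + b' • y2)) j
          = a * (ρ * x j - c j + (Aᵀ *ᵥ y1) j) + b' * (ρ * x j - c j + (Aᵀ *ᵥ y2) j) := by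
        rw [mulVec_add, mulVec_smul, mulVec_smul]
        simp only [Pi.add_apply, Pi.smul_apply, smul_eq_mul]
        linear_combination (ρ * x j - c j) * hab.symm
      rw [harg]
      have := hconv.2 (Set.mem_univ (ρ * x j - c j + (Aᵀ *ᵥ y1) j))
        (Set.mem_univ (ρ * x j - c j + (Aᵀ *ᵥ y2) j)) ha hb hab
      simpa using this
    have hdot : b ⬝ᵥ (a • y1 + b' • y2) = a * (b ⬝ᵥ y1) + b' * (b ⬝ᵥ y2) := by
      simp [dotProduct_add, dotProduct_smul]
    calc -(ρ * (b ⬝ᵥ (a • y1 + b' • y2)))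
          + ∑ j, sbal_h μ ρ (ρ * x j - c j + (Aᵀ *ᵥ (a • y1 + b' • y2)) j)
        ≤ -(ρ * (b ⬝ᵥ (a • y1 + b' • y2)))
          + ∑ j, (a * sbal_h μ ρ (ρ * x j - c j + (Aᵀ *ᵥ y1) j)
            + b' * sbal_h μ ρ (ρ * x j - c j + (Aᵀ *ᵥ y2) j)) := by
          gcongr with j _
          exact key j
      _ = a * (-(ρ * (b ⬝ᵥ y1)) + ∑ j, sbal_h μ ρ (ρ * x j - c j + (Aᵀ *ᵥ y1) j))
          + b' * (-(ρ * (b ⬝ᵥ y2)) + ∑ j, sbal_h μ ρ (ρ * x j - c j + (Aᵀ *ᵥ y2) j)) := by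
          rw [hdot, Finset.sum_add_distrib, ← Finset.mul_sum, ← Finset.mul_sum]
          ring
  · intro y v
    set d : Fin n → ℝ := fun j => ρ * x j - c j + (Aᵀ *ᵥ y) j with hd
    set e : Fin n → ℝ := fun j => (Aᵀ *ᵥ v) j with he
    have hfun : (fun τ : ℝ => L (y + τ • v))
        = fun τ : ℝ => -(ρ * (b ⬝ᵥ y + τ * (b ⬝ᵥ v))) + ∑ j, sbal_h μ ρ (d j + τ * e j) := by
      funext τ
      rw [hL]
      have h1 : b ⬝ᵥ (y + τ • v) = b ⬝ᵥ y + τ * (b ⬝ᵥ v) := by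
        simp [dotProduct_add, dotProduct_smul]
      rw [h1]
      congr 1
      apply Finset.sum_congr rfl
      intro j _
      congr 1
      rw [mulVec_add, mulVec_smul]
      simp [hd, he]
      ring
    rw [hfun]
    have hlin : HasDerivAt (fun τ : ℝ => -(ρ * (b ⬝ᵥ y + τ * (b ⬝ᵥ v)))) (-(ρ * (b ⬝ᵥ v))) 0 := by
      have : HasDerivAt (fun τ : ℝ => b ⬝ᵥ y + τ * (b ⬝ᵥ v)) (b ⬝ᵥ v) 0 := by
        simpa using ((hasDerivAt_id (0:ℝ)).mul_const (b ⬝ᵥ v)).const_add (b ⬝ᵥ y)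
      exact (this.const_mul ρ).neg
    have hsum : HasDerivAt (fun τ : ℝ => ∑ j, sbal_h μ ρ (d j + τ * e j))
        (∑ j, e j * sbal_z μ ρ (d j)) 0 := by
      apply HasDerivAt.fun_sum
      intro j _
      have haff : HasDerivAt (fun τ : ℝ => d j + τ * e j) (e j) 0 := by
        simpa using ((hasDerivAt_id (0:ℝ)).mul_const (e j)).const_add (d j)
      have := (sbal_h_hasDerivAt hμ hρ (d j + 0 * e j)).comp 0 haff
      exact this.congr_deriv (by simp [mul_comm])
    have h := hlin.add hsum
    refine h.congr_deriv (Eq.symm ?_)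
    have hdd : (A *ᵥ (fun j => sbal_z μ ρ (d j)) - ρ • b) ⬝ᵥ v
        = (A *ᵥ (fun j => sbal_z μ ρ (d j))) ⬝ᵥ v - ρ * (b ⬝ᵥ v) := by
      rw [sub_dotProduct, smul_dotProduct]
      simp
    rw [hdd]
    have hAv : (A *ᵥ (fun j => sbal_z μ ρ (d j))) ⬝ᵥ v = ∑ j, e j * sbal_z μ ρ (d j) := by
      simp only [dotProduct, mulVec, he, transpose_apply, Finset.sum_mul, Finset.mul_sum]
      rw [Finset.sum_comm]
      apply Finset.sum_congr rfl
      intro j _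
      apply Finset.sum_congr rfl
      intro i _
      ring
    rw [hAv]
    ring
end

section
/- Let f : ℝ^m → ℝ be differentiable and convex with M symmetric positive definite satisfying f(u) ≤ f(v) + ∇f(v)^T(u−v) + (1/2)(u−v)^T M (u−v) for all u,v. Then for all u, v ∈ ℝ^m: (∇f(u) − ∇f(v))^T(u−v) ≥ ‖∇f(u) − ∇f(v)‖²_{M^{-1}} (co-coercivity of the gradient in the M^{-1}-norm). -/
open Matrix Filter

theorem grad_ineq {m : ℕ} (f : (Fin m → ℝ) → ℝ) (g : (Fin m → ℝ) → (Fin m → ℝ))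
    (hconv : ConvexOn ℝ Set.univ f)
    (hgrad : ∀ y v : Fin m → ℝ, HasDerivAt (fun τ : ℝ => f (y + τ • v)) (g y ⬝ᵥ v) 0)
    (u x : Fin m → ℝ) : g u ⬝ᵥ (x - u) ≤ f x - f u := by
  set h : ℝ → ℝ := fun τ => f (u + τ • (x - u)) with hh
  have hd := hgrad u (x - u)
  have ht : Tendsto (slope h 0) (nhdsWithin 0 (Set.Ioi 0)) (nhds (g u ⬝ᵥ (x - u))) := by
    refine (hasDerivAt_iff_tendsto_slope.mp hd).mono_left (nhdsWithin_mono _ ?_)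
    intro τ hτ
    simp only [Set.mem_compl_iff, Set.mem_singleton_iff]
    exact ne_of_gt hτ
  refine le_of_tendsto ht ?_
  filter_upwards [Ioo_mem_nhdsGT_of_mem (by norm_num : (0:ℝ) ∈ Set.Ico 0 1)] with τ hτ
  obtain ⟨hτ0, hτ1⟩ := hτ
  have hc := hconv.2 (Set.mem_univ u) (Set.mem_univ x) (by linarith : (0:ℝ) ≤ 1 - τ)
    (le_of_lt hτ0) (by ring)
  have heq : (1 - τ) • u + τ • x = u + τ • (x - u) := by module
  rw [heq] at hc
  have hh0 : h 0 = f u := by simp [hh]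
  have hhτ : h τ ≤ (1 - τ) * f u + τ * f x := hc
  rw [slope_def_field, hh0, sub_zero, div_le_iff₀ hτ0]
  nlinarith [hhτ]

theorem strong_ineq {m : ℕ} (f : (Fin m → ℝ) → ℝ) (g : (Fin m → ℝ) → (Fin m → ℝ))
    (M : Matrix (Fin m) (Fin m) ℝ) (hMpd : M.PosDef)
    (hconv : ConvexOn ℝ Set.univ f)
    (hgrad : ∀ y v : Fin m → ℝ, HasDerivAt (fun τ : ℝ => f (y + τ • v)) (g y ⬝ᵥ v) 0)
    (hmaj : ∀ u v : Fin m → ℝ,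
      f u ≤ f v + g v ⬝ᵥ (u - v) + (1 / 2) * ((u - v) ⬝ᵥ (M *ᵥ (u - v))))
    (u b : Fin m → ℝ) :
    f u + g u ⬝ᵥ (b - u) + (1/2) * ((g b - g u) ⬝ᵥ (M⁻¹ *ᵥ (g b - g u))) ≤ f b := by
  set w : Fin m → ℝ := g b - g u with hw
  set a : Fin m → ℝ := b - M⁻¹ *ᵥ w with ha
  have hB := grad_ineq f g hconv hgrad u a
  have hM := hmaj a b
  have hMMinv : M *ᵥ (M⁻¹ *ᵥ w) = w := by
    rw [Matrix.mulVec_mulVec,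
      Matrix.mul_nonsing_inv M (isUnit_iff_ne_zero.mpr hMpd.det_pos.ne'), Matrix.one_mulVec]
  have hab : a - b = -(M⁻¹ *ᵥ w) := by simp [ha]
  rw [hab] at hM
  have hq : (-(M⁻¹ *ᵥ w)) ⬝ᵥ (M *ᵥ -(M⁻¹ *ᵥ w)) = w ⬝ᵥ (M⁻¹ *ᵥ w) := by
    rw [Matrix.mulVec_neg, dotProduct_neg, neg_dotProduct, neg_neg, hMMinv]
    exact dotProduct_comm _ _
  rw [hq] at hM
  have hau : a - u = (b - u) - M⁻¹ *ᵥ w := by simp [ha]; abel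
  rw [hau, dotProduct_sub] at hB
  have h1 : g b ⬝ᵥ -(M⁻¹ *ᵥ w) = -(g b ⬝ᵥ (M⁻¹ *ᵥ w)) := dotProduct_neg _ _
  rw [h1] at hM
  have h2 : (g b - g u) ⬝ᵥ (M⁻¹ *ᵥ w) = g b ⬝ᵥ (M⁻¹ *ᵥ w) - g u ⬝ᵥ (M⁻¹ *ᵥ w) :=
    sub_dotProduct _ _ _
  have h3 : w ⬝ᵥ (M⁻¹ *ᵥ w) = g b ⬝ᵥ (M⁻¹ *ᵥ w) - g u ⬝ᵥ (M⁻¹ *ᵥ w) := by rw [hw] at h2 ⊢; exact h2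
  linarith

theorem stmt8 {m : ℕ} (f : (Fin m → ℝ) → ℝ) (g : (Fin m → ℝ) → (Fin m → ℝ))
    (M : Matrix (Fin m) (Fin m) ℝ) (hMsymm : M.IsSymm) (hMpd : M.PosDef)
    (hconv : ConvexOn ℝ Set.univ f)
    (hgrad : ∀ y v : Fin m → ℝ, HasDerivAt (fun τ : ℝ => f (y + τ • v)) (g y ⬝ᵥ v) 0)
    (hmaj : ∀ u v : Fin m → ℝ,
      f u ≤ f v + g v ⬝ᵥ (u - v) + (1 / 2) * ((u - v) ⬝ᵥ (M *ᵥ (u - v)))) :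
    ∀ u v : Fin m → ℝ,
      (g u - g v) ⬝ᵥ (M⁻¹ *ᵥ (g u - g v)) ≤ (g u - g v) ⬝ᵥ (u - v) := by
  intro u v
  have h1 := strong_ineq f g M hMpd hconv hgrad hmaj u v
  have h2 := strong_ineq f g M hMpd hconv hgrad hmaj v u
  have hneg : (g v - g u) ⬝ᵥ (M⁻¹ *ᵥ (g v - g u)) = (g u - g v) ⬝ᵥ (M⁻¹ *ᵥ (g u - g v)) := by
    rw [show g v - g u = -(g u - g v) by abel, Matrix.mulVec_neg, dotProduct_neg,
      neg_dotProduct, neg_neg]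
  have hd1 : g u ⬝ᵥ (v - u) = -(g u ⬝ᵥ (u - v)) := by
    rw [show v - u = -(u - v) by abel, dotProduct_neg]
  have hd2 : (g u - g v) ⬝ᵥ (u - v) = g u ⬝ᵥ (u - v) - g v ⬝ᵥ (u - v) := sub_dotProduct _ _ _
  rw [hneg, hd1] at h1
  linarith
end

section
/- Let f : ℝ^m → ℝ be twice differentiable, M symmetric positive definite, and δ ∈ (0,1) such that δ M ⪯ ∇²f(y) ⪯ M for all y. Then for all u, v: (∇f(u) − ∇f(v))^T(u−v) ≥ (1/(1+δ))‖∇f(u) − ∇f(v)‖²_{M^{-1}} + (δ/(1+δ))‖u−v‖²_M. -/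
open Matrix

lemma scalar_taylor_upper (F G : ℝ → ℝ) (K : ℝ)
    (hF : ∀ τ, HasDerivAt F (G τ) τ)
    (hG : ∀ τ, ∃ D, HasDerivAt G D τ ∧ D ≤ K) :
    F 1 ≤ F 0 + G 0 + K / 2 := by
  have hGanti : Antitone (fun τ => G τ - τ * K) := by
    apply antitone_of_deriv_nonpos
    · intro τ
      obtain ⟨D, hD, _⟩ := hG τ
      exact (hD.sub (hasDerivAt_mul_const K)).differentiableAt
    · intro τ
      obtain ⟨D, hD, hle⟩ := hG τ
      rw [(hD.fun_sub (hasDerivAt_mul_const K)).deriv]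
      linarith
  have hGle : ∀ τ : ℝ, 0 ≤ τ → G τ ≤ G 0 + τ * K := by
    intro τ hτ
    have := hGanti hτ
    simp only [zero_mul, sub_zero] at this
    linarith
  have hφd : ∀ τ : ℝ, HasDerivAt (fun τ => F τ - τ * G 0 - τ^2 * (K/2))
      (G τ - G 0 - τ * K) τ := by
    intro τ
    have h1 := (hF τ).fun_sub (hasDerivAt_mul_const (G 0))
    have h2 := (hasDerivAt_pow 2 τ).mul_const (K/2)
    convert h1.fun_sub h2 using 1
    · rfl
    · rfl
    · push_cast; ring
  have hanti : AntitoneOn (fun τ => F τ - τ * G 0 - τ^2 * (K/2)) (Set.Ici (0:ℝ)) := by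
    apply antitoneOn_of_deriv_nonpos (convex_Ici 0)
    · exact Continuous.continuousOn (by
        have : Differentiable ℝ (fun τ => F τ - τ * G 0 - τ^2 * (K/2)) :=
          fun τ => (hφd τ).differentiableAt
        exact this.continuous)
    · intro τ hτ
      rw [interior_Ici] at hτ
      exact ((hφd τ).differentiableAt).differentiableWithinAt
    · intro τ hτ
      rw [interior_Ici] at hτ
      rw [(hφd τ).deriv]
      have := hGle τ hτ.le
      linarith
  have := hanti (Set.self_mem_Ici) (by norm_num : (1:ℝ) ∈ Set.Ici 0) zero_le_one
  simp only [one_pow, one_mul, ne_eq] at this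
  norm_num at this
  linarith

lemma scalar_taylor_lower (F G : ℝ → ℝ) (K : ℝ)
    (hF : ∀ τ, HasDerivAt F (G τ) τ)
    (hG : ∀ τ, ∃ D, HasDerivAt G D τ ∧ K ≤ D) :
    F 0 + G 0 + K / 2 ≤ F 1 := by
  have := scalar_taylor_upper (fun τ => -F τ) (fun τ => -G τ) (-K)
    (fun τ => (hF τ).neg)
    (fun τ => by obtain ⟨D, hD, hle⟩ := hG τ; exact ⟨-D, hD.neg, by linarith⟩)
  linarith

lemma step_one {m : ℕ} (M : Matrix (Fin m) (Fin m) ℝ) (F : (Fin m → ℝ) → ℝ)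
    (G : (Fin m → ℝ) → (Fin m → ℝ)) (δ : ℝ) (hδ1 : δ < 1)
    (hM : ∀ p : Fin m → ℝ, M *ᵥ (M⁻¹ *ᵥ p) = p)
    (Lh : ∀ x w : Fin m → ℝ, F x + G x ⬝ᵥ w ≤ F (x + w))
    (Uh : ∀ x w : Fin m → ℝ, F (x + w) ≤ F x + G x ⬝ᵥ w + (1-δ)/2 * (w ⬝ᵥ (M *ᵥ w)))
    (a b : Fin m → ℝ) :
    F b + G b ⬝ᵥ (a - b) + (1/(2*(1-δ))) * ((G a - G b) ⬝ᵥ (M⁻¹ *ᵥ (G a - G b))) ≤ F a := by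
  have hpos : (0:ℝ) < 1 - δ := by linarith
  set p : Fin m → ℝ := G a - G b with hp
  set r : Fin m → ℝ := M⁻¹ *ᵥ p with hr
  set c : ℝ := 1/(1-δ) with hc
  set s : ℝ := p ⬝ᵥ r with hs
  set z : Fin m → ℝ := a - c • r with hz
  have h1 : F b + G b ⬝ᵥ (z - b) ≤ F z := by
    have := Lh b (z - b); rwa [add_sub_cancel] at this
  have h2 : F z ≤ F a + G a ⬝ᵥ (z - a) + (1-δ)/2 * ((z - a) ⬝ᵥ (M *ᵥ (z - a))) := by
    have := Uh a (z - a); rwa [add_sub_cancel] at this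
  have hza : z - a = -(c • r) := by rw [hz]; abel
  have hq : (z - a) ⬝ᵥ (M *ᵥ (z - a)) = c^2 * s := by
    rw [hza, Matrix.mulVec_neg, dotProduct_neg, neg_dotProduct, neg_neg,
      Matrix.mulVec_smul, hr, hM, smul_dotProduct, dotProduct_smul,
      smul_eq_mul, smul_eq_mul, dotProduct_comm, ← hs]
    ring
  have hsplit : G b ⬝ᵥ (z - b) = G b ⬝ᵥ (a - b) + G b ⬝ᵥ (z - a) := by
    rw [← dotProduct_add]; congr 1; abel
  have hdiff : G a ⬝ᵥ (z - a) - G b ⬝ᵥ (z - a) = -(c * s) := by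
    rw [← sub_dotProduct, ← hp, hza, dotProduct_neg, dotProduct_smul,
      smul_eq_mul, ← hs]
  have hcoef : c * s - (1-δ)/2 * (c^2 * s) = (1/(2*(1-δ))) * s := by
    rw [hc]; field_simp; ring
  nlinarith [h1, h2, hq, hsplit, hdiff, hcoef]

theorem stmt9 {m : ℕ} (f : (Fin m → ℝ) → ℝ) (g : (Fin m → ℝ) → (Fin m → ℝ))
    (Hess : (Fin m → ℝ) → Matrix (Fin m) (Fin m) ℝ)
    (M : Matrix (Fin m) (Fin m) ℝ) (hMsymm : M.IsSymm) (hMpd : M.PosDef)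
    (δ : ℝ) (hδ : δ ∈ Set.Ioo (0 : ℝ) 1)
    (hgrad : ∀ y v : Fin m → ℝ, HasDerivAt (fun τ : ℝ => f (y + τ • v)) (g y ⬝ᵥ v) 0)
    (hhess : ∀ y u : Fin m → ℝ,
      HasDerivAt (fun τ : ℝ => g (y + τ • u)) (Hess y *ᵥ u) 0)
    (hlower : ∀ y w : Fin m → ℝ, δ * (w ⬝ᵥ (M *ᵥ w)) ≤ w ⬝ᵥ (Hess y *ᵥ w))
    (hupper : ∀ y w : Fin m → ℝ, w ⬝ᵥ (Hess y *ᵥ w) ≤ w ⬝ᵥ (M *ᵥ w)) :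
    ∀ u v : Fin m → ℝ,
      (1 / (1 + δ)) * ((g u - g v) ⬝ᵥ (M⁻¹ *ᵥ (g u - g v)))
        + (δ / (1 + δ)) * ((u - v) ⬝ᵥ (M *ᵥ (u - v)))
      ≤ (g u - g v) ⬝ᵥ (u - v) := by
  obtain ⟨hδ0, hδ1⟩ := hδ
  have hdet : IsUnit M.det := ((Matrix.isUnit_iff_isUnit_det M).mp hMpd.isUnit)
  have hMMinv : ∀ p : Fin m → ℝ, M *ᵥ (M⁻¹ *ᵥ p) = p := by
    intro p
    rw [Matrix.mulVec_mulVec, Matrix.mul_nonsing_inv _ hdet, Matrix.one_mulVec]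
  have hMinvM : ∀ p : Fin m → ℝ, M⁻¹ *ᵥ (M *ᵥ p) = p := by
    intro p
    rw [Matrix.mulVec_mulVec, Matrix.nonsing_inv_mul _ hdet, Matrix.one_mulVec]
  have hMinvsymm : (M⁻¹).IsSymm := by
    rw [Matrix.IsSymm, Matrix.transpose_nonsing_inv, hMsymm.eq]
  have symdot : ∀ (A : Matrix (Fin m) (Fin m) ℝ), A.IsSymm →
      ∀ x w : Fin m → ℝ, x ⬝ᵥ (A *ᵥ w) = w ⬝ᵥ (A *ᵥ x) := by
    intro A hA x w
    rw [Matrix.dotProduct_mulVec, dotProduct_comm, ← Matrix.mulVec_transpose, hA.eq]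
  -- directional derivatives at every point of a line
  have key1 : ∀ (x w : Fin m → ℝ) (τ₀ : ℝ),
      HasDerivAt (fun τ => f (x + τ • w)) (g (x + τ₀ • w) ⬝ᵥ w) τ₀ := by
    intro x w τ₀
    have hshift : HasDerivAt (fun τ : ℝ => τ - τ₀) 1 τ₀ := by
      simpa using (hasDerivAt_id τ₀).sub_const τ₀
    have h0 : HasDerivAt (fun σ : ℝ => f (x + τ₀ • w + σ • w)) (g (x + τ₀ • w) ⬝ᵥ w)
        ((fun τ : ℝ => τ - τ₀) τ₀) := by simpa using hgrad (x + τ₀ • w) w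
    have hc := HasDerivAt.comp (h := fun τ : ℝ => τ - τ₀) τ₀ h0 hshift
    have heq : (fun τ : ℝ => f (x + τ • w))
        = ((fun σ : ℝ => f (x + τ₀ • w + σ • w)) ∘ (fun τ : ℝ => τ - τ₀)) := by
      funext τ; simp only [Function.comp]; congr 1; module
    rw [heq]; simpa using hc
  have key2 : ∀ (x w : Fin m → ℝ) (τ₀ : ℝ),
      HasDerivAt (fun τ => g (x + τ • w) ⬝ᵥ w) ((Hess (x + τ₀ • w) *ᵥ w) ⬝ᵥ w) τ₀ := by
    intro x w τ₀
    have hshift : HasDerivAt (fun τ : ℝ => τ - τ₀) 1 τ₀ := by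
      simpa using (hasDerivAt_id τ₀).sub_const τ₀
    have h0 : HasDerivAt (fun σ : ℝ => g (x + τ₀ • w + σ • w)) (Hess (x + τ₀ • w) *ᵥ w)
        ((fun τ : ℝ => τ - τ₀) τ₀) := by simpa using hhess (x + τ₀ • w) w
    have hc := HasDerivAt.scomp (h := fun τ : ℝ => τ - τ₀) τ₀ h0 hshift
    have hc' : HasDerivAt (fun τ : ℝ => g (x + τ • w)) (Hess (x + τ₀ • w) *ᵥ w) τ₀ := by
      have heq : (fun τ : ℝ => g (x + τ • w))
          = ((fun σ : ℝ => g (x + τ₀ • w + σ • w)) ∘ (fun τ : ℝ => τ - τ₀)) := by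
        funext τ; simp only [Function.comp]
        have hv : x + τ • w = x + τ₀ • w + (τ - τ₀) • w := by module
        rw [hv]
      rw [heq]; simpa using hc
    have hsum : HasDerivAt (fun τ : ℝ => ∑ i, g (x + τ • w) i * w i)
        (∑ i, (Hess (x + τ₀ • w) *ᵥ w) i * w i) τ₀ :=
      HasDerivAt.fun_sum (fun i _ => ((hasDerivAt_pi.mp hc') i).mul_const (w i))
    simpa [dotProduct] using hsum
  -- Taylor-type bounds
  have taylorU : ∀ x w : Fin m → ℝ,
      f (x + w) ≤ f x + g x ⬝ᵥ w + (w ⬝ᵥ (M *ᵥ w)) / 2 := by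
    intro x w
    have := scalar_taylor_upper (fun τ => f (x + τ • w)) (fun τ => g (x + τ • w) ⬝ᵥ w)
      (w ⬝ᵥ (M *ᵥ w)) (key1 x w)
      (fun τ => ⟨_, key2 x w τ, by
        rw [dotProduct_comm (Hess (x + τ • w) *ᵥ w) w]
        exact hupper (x + τ • w) w⟩)
    simpa using this
  have taylorL : ∀ x w : Fin m → ℝ,
      f x + g x ⬝ᵥ w + δ * (w ⬝ᵥ (M *ᵥ w)) / 2 ≤ f (x + w) := by
    intro x w
    have := scalar_taylor_lower (fun τ => f (x + τ • w)) (fun τ => g (x + τ • w) ⬝ᵥ w)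
      (δ * (w ⬝ᵥ (M *ᵥ w))) (key1 x w)
      (fun τ => ⟨_, key2 x w τ, by
        rw [dotProduct_comm (Hess (x + τ • w) *ᵥ w) w]
        exact hlower (x + τ • w) w⟩)
    simpa using this
  -- the auxiliary function h(x) = f(x) - δ/2 x^T M x and its gradient
  set F : (Fin m → ℝ) → ℝ := fun x => f x - δ/2 * (x ⬝ᵥ (M *ᵥ x)) with hF
  set G : (Fin m → ℝ) → (Fin m → ℝ) := fun x => g x - δ • (M *ᵥ x) with hG
  have hqexp : ∀ x w : Fin m → ℝ,
      (x + w) ⬝ᵥ (M *ᵥ (x + w))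
        = x ⬝ᵥ (M *ᵥ x) + 2 * (w ⬝ᵥ (M *ᵥ x)) + w ⬝ᵥ (M *ᵥ w) := by
    intro x w
    rw [Matrix.mulVec_add, dotProduct_add, add_dotProduct,
      add_dotProduct, symdot M hMsymm x w]
    ring
  have hGdot : ∀ x w : Fin m → ℝ,
      G x ⬝ᵥ w = g x ⬝ᵥ w - δ * (w ⬝ᵥ (M *ᵥ x)) := by
    intro x w
    rw [hG]
    rw [sub_dotProduct, smul_dotProduct, smul_eq_mul,
      dotProduct_comm (M *ᵥ x) w]
  have Lh : ∀ x w : Fin m → ℝ, F x + G x ⬝ᵥ w ≤ F (x + w) := by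
    intro x w
    have ht := taylorL x w
    simp only [hF]
    rw [hqexp x w, hGdot x w]
    linarith
  have Uh : ∀ x w : Fin m → ℝ,
      F (x + w) ≤ F x + G x ⬝ᵥ w + (1-δ)/2 * (w ⬝ᵥ (M *ᵥ w)) := by
    intro x w
    have ht := taylorU x w
    simp only [hF]
    rw [hqexp x w, hGdot x w]
    linarith
  -- co-coercivity
  intro u v
  have hs1 := step_one M F G δ hδ1 hMMinv Lh Uh u v
  have hs2 := step_one M F G δ hδ1 hMMinv Lh Uh v u
  have hsym : (G v - G u) ⬝ᵥ (M⁻¹ *ᵥ (G v - G u))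
      = (G u - G v) ⬝ᵥ (M⁻¹ *ᵥ (G u - G v)) := by
    rw [show G v - G u = -(G u - G v) by abel, Matrix.mulVec_neg,
      dotProduct_neg, neg_dotProduct, neg_neg]
  have hvu : G u ⬝ᵥ (v - u) = -(G u ⬝ᵥ (u - v)) := by
    rw [show v - u = -(u - v) by abel, dotProduct_neg]
  have coco : (1/(1-δ)) * ((G u - G v) ⬝ᵥ (M⁻¹ *ᵥ (G u - G v)))
      ≤ (G u - G v) ⬝ᵥ (u - v) := by
    rw [hsym, hvu] at hs2
    have hhalf : (1:ℝ)/(2*(1-δ)) = 1/2 * (1/(1-δ)) := (one_div_mul_one_div 2 (1-δ)).symm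
    rw [hhalf] at hs1 hs2
    have hsub : G u ⬝ᵥ (u - v) - G v ⬝ᵥ (u - v) = (G u - G v) ⬝ᵥ (u - v) :=
      (sub_dotProduct _ _ _).symm
    rw [← hsub]
    linarith
  -- unpack
  set a : Fin m → ℝ := u - v with ha
  set d : Fin m → ℝ := g u - g v with hd
  have hGuv : G u - G v = d - δ • (M *ᵥ a) := by
    rw [hG, hd, ha]
    simp only
    rw [Matrix.mulVec_sub, smul_sub]
    abel
  have hMinvp : M⁻¹ *ᵥ (d - δ • (M *ᵥ a)) = M⁻¹ *ᵥ d - δ • a := by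
    rw [Matrix.mulVec_sub, Matrix.mulVec_smul, hMinvM]
  set α : ℝ := a ⬝ᵥ (M *ᵥ a) with hα
  set σ : ℝ := d ⬝ᵥ (M⁻¹ *ᵥ d) with hσ
  set t : ℝ := d ⬝ᵥ a with ht
  have hcross : (M *ᵥ a) ⬝ᵥ (M⁻¹ *ᵥ d) = t := by
    rw [symdot M⁻¹ hMinvsymm (M *ᵥ a) d, hMinvM, ht]
  have hsexp : (G u - G v) ⬝ᵥ (M⁻¹ *ᵥ (G u - G v)) = σ - 2*δ*t + δ^2*α := by
    rw [hGuv, hMinvp, sub_dotProduct, dotProduct_sub, dotProduct_sub,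
      smul_dotProduct, smul_dotProduct, dotProduct_smul,
      dotProduct_smul, smul_eq_mul, smul_eq_mul, smul_eq_mul, smul_eq_mul,
      hcross, dotProduct_comm (M *ᵥ a) a, ← hα, ← hσ, ← ht]
    ring
  have hpa : (G u - G v) ⬝ᵥ (u - v) = t - δ*α := by
    rw [hGuv, ← ha, sub_dotProduct, smul_dotProduct, smul_eq_mul,
      dotProduct_comm (M *ᵥ a) a, ← hα, ← ht]
  rw [hsexp, hpa] at coco
  have hpos1 : (0:ℝ) < 1 - δ := by linarith
  have hpos2 : (0:ℝ) < 1 + δ := by linarith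
  rw [div_mul_eq_mul_div, one_mul, div_le_iff₀ hpos1] at coco
  have hfinal : σ + δ * α ≤ (1 + δ) * t := by nlinarith [coco]
  have hgoal : (1 / (1 + δ)) * σ + (δ / (1 + δ)) * α = (σ + δ * α) / (1 + δ) := by
    field_simp
  rw [hgoal, div_le_iff₀ hpos2]
  linarith
end

section
/- Let f : ℝ^m → ℝ be twice differentiable with δ M ⪯ ∇²f(y) ⪯ M for all y, where M is symmetric positive definite and δ ∈ (0,1), and let y* be the minimizer of f. Then the iteration y_{ℓ+1} = y_ℓ − M^{-1}∇f(y_ℓ) satisfies ‖y_{ℓ+1} − y*‖²_M ≤ ((1−δ)/(1+δ))‖y_ℓ − y*‖²_M, hence ‖y_ℓ − y*‖²_M ≤ ((1−δ)/(1+δ))^ℓ ‖y_0 − y*‖²_M (global linear convergence). -/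
open Matrix

private lemma shiftDeriv {E : Type*} [NormedAddCommGroup E] [NormedSpace ℝ E]
    {F : ℝ → E} {c : E} (τ₀ : ℝ)
    (h : HasDerivAt (fun τ => F (τ₀ + τ)) c 0) : HasDerivAt F c τ₀ := by
  have h2 : HasDerivAt (fun x : ℝ => x - τ₀) 1 τ₀ := (hasDerivAt_id τ₀).sub_const τ₀
  have h3 : HasDerivAt (fun τ => F (τ₀ + τ)) c (τ₀ - τ₀) := by
    rw [sub_self]; exact h
  have h4 := HasDerivAt.scomp (h := fun x : ℝ => x - τ₀) τ₀ h3 h2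
  simp only [one_smul] at h4
  convert h4 using 1
  funext x
  simp [Function.comp]

private lemma symmDot {m : ℕ} {M : Matrix (Fin m) (Fin m) ℝ} (hM : M.IsSymm)
    (u v : Fin m → ℝ) : u ⬝ᵥ (M *ᵥ v) = v ⬝ᵥ (M *ᵥ u) := by
  rw [dotProduct_mulVec, dotProduct_comm, ← mulVec_transpose, hM.eq]

private lemma taylor_upper_aux {F G D : ℝ → ℝ} {a : ℝ}
    (hF : ∀ τ, HasDerivAt F (G τ) τ) (hG : ∀ τ, HasDerivAt G (D τ) τ)
    (hD : ∀ τ, D τ ≤ a) : F 1 ≤ F 0 + G 0 + a / 2 := by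
  have hK : ∀ τ : ℝ, HasDerivAt (fun τ => G τ - τ * a) (D τ - a) τ := fun τ =>
    (hG τ).sub (by simpa using (hasDerivAt_id τ).mul_const a)
  have dK : Differentiable ℝ (fun τ : ℝ => G τ - τ * a) := fun τ => (hK τ).differentiableAt
  have hKanti : AntitoneOn (fun τ : ℝ => G τ - τ * a) (Set.Ici 0) := by
    apply antitoneOn_of_deriv_nonpos (convex_Ici 0) dK.continuous.continuousOn
      dK.differentiableOn
    intro τ _
    rw [(hK τ).deriv]
    linarith [hD τ]
  have hKle : ∀ τ : ℝ, 0 ≤ τ → G τ ≤ G 0 + τ * a := by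
    intro τ hτ
    have := hKanti Set.self_mem_Ici (by exact hτ) hτ
    simp only [zero_mul, sub_zero] at this
    linarith
  have hH : ∀ τ : ℝ, HasDerivAt (fun τ => F τ - τ * G 0 - τ ^ 2 * a / 2)
      (G τ - G 0 - τ * a) τ := by
    intro τ
    have h2 : HasDerivAt (fun τ : ℝ => τ * G 0) (G 0) τ := by
      simpa using (hasDerivAt_id τ).mul_const (G 0)
    have h3 : HasDerivAt (fun τ : ℝ => τ ^ 2 * a / 2) (τ * a) τ := by
      have := ((hasDerivAt_pow 2 τ).mul_const a).div_const 2
      refine this.congr_deriv ?_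
      norm_num
      ring
    exact ((hF τ).sub h2).sub h3
  have dH : Differentiable ℝ (fun τ : ℝ => F τ - τ * G 0 - τ ^ 2 * a / 2) :=
    fun τ => (hH τ).differentiableAt
  have hHanti : AntitoneOn (fun τ : ℝ => F τ - τ * G 0 - τ ^ 2 * a / 2) (Set.Icc 0 1) := by
    apply antitoneOn_of_deriv_nonpos (convex_Icc 0 1) dH.continuous.continuousOn
      dH.differentiableOn
    intro τ hτ
    rw [interior_Icc] at hτ
    rw [(hH τ).deriv]
    linarith [hKle τ hτ.1.le]
  have := hHanti (Set.left_mem_Icc.mpr zero_le_one) (Set.right_mem_Icc.mpr zero_le_one)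
    zero_le_one
  simp only [one_pow, one_mul, zero_pow, zero_mul, sub_zero, ne_eq, OfNat.ofNat_ne_zero,
    not_false_eq_true, zero_div] at this
  linarith

private lemma taylor_lower_aux {F G D : ℝ → ℝ} {b : ℝ}
    (hF : ∀ τ, HasDerivAt F (G τ) τ) (hG : ∀ τ, HasDerivAt G (D τ) τ)
    (hD : ∀ τ, b ≤ D τ) : F 0 + G 0 + b / 2 ≤ F 1 := by
  have := taylor_upper_aux (F := fun τ => -F τ) (G := fun τ => -G τ)
    (D := fun τ => -D τ) (a := -b)
    (fun τ => (hF τ).neg) (fun τ => (hG τ).neg)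
    (fun τ => by show -D τ ≤ -b; linarith [hD τ])
  simp only [neg_div] at this
  linarith

theorem stmt10 {m : ℕ} (f : (Fin m → ℝ) → ℝ) (g : (Fin m → ℝ) → (Fin m → ℝ))
    (Hess : (Fin m → ℝ) → Matrix (Fin m) (Fin m) ℝ)
    (M : Matrix (Fin m) (Fin m) ℝ) (hMsymm : M.IsSymm) (hMpd : M.PosDef)
    (δ : ℝ) (hδ : δ ∈ Set.Ioo (0 : ℝ) 1)
    (hgrad : ∀ y v : Fin m → ℝ, HasDerivAt (fun τ : ℝ => f (y + τ • v)) (g y ⬝ᵥ v) 0)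
    (hhess : ∀ y u : Fin m → ℝ,
      HasDerivAt (fun τ : ℝ => g (y + τ • u)) (Hess y *ᵥ u) 0)
    (hlower : ∀ y w : Fin m → ℝ, δ * (w ⬝ᵥ (M *ᵥ w)) ≤ w ⬝ᵥ (Hess y *ᵥ w))
    (hupper : ∀ y w : Fin m → ℝ, w ⬝ᵥ (Hess y *ᵥ w) ≤ w ⬝ᵥ (M *ᵥ w))
    (ystar : Fin m → ℝ) (hmin : ∀ w, f ystar ≤ f w)
    (y : ℕ → (Fin m → ℝ)) (hiter : ∀ ℓ : ℕ, y (ℓ + 1) = y ℓ - M⁻¹ *ᵥ g (y ℓ)) :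
    (∀ ℓ : ℕ,
      (y (ℓ + 1) - ystar) ⬝ᵥ (M *ᵥ (y (ℓ + 1) - ystar))
        ≤ ((1 - δ) / (1 + δ)) * ((y ℓ - ystar) ⬝ᵥ (M *ᵥ (y ℓ - ystar)))) ∧
    (∀ ℓ : ℕ,
      (y ℓ - ystar) ⬝ᵥ (M *ᵥ (y ℓ - ystar))
        ≤ ((1 - δ) / (1 + δ)) ^ ℓ * ((y 0 - ystar) ⬝ᵥ (M *ᵥ (y 0 - ystar)))) := by
  obtain ⟨hδ0, hδ1⟩ := hδ
  have h1δ : (0:ℝ) < 1 + δ := by linarith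
  have h1mδ : (0:ℝ) < 1 - δ := by linarith
  -- basic matrix facts
  have hdet : IsUnit M.det := isUnit_iff_ne_zero.mpr hMpd.det_pos.ne'
  have hMinv : ∀ v : Fin m → ℝ, M⁻¹ *ᵥ (M *ᵥ v) = v := by
    intro v; rw [mulVec_mulVec, nonsing_inv_mul M hdet, one_mulVec]
  have hMinv' : ∀ v : Fin m → ℝ, M *ᵥ (M⁻¹ *ᵥ v) = v := by
    intro v; rw [mulVec_mulVec, mul_nonsing_inv M hdet, one_mulVec]
  have hMinvsymm : (M⁻¹).IsSymm := by
    rw [Matrix.IsSymm, transpose_nonsing_inv, hMsymm.eq]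
  have hQnn : ∀ v : Fin m → ℝ, 0 ≤ v ⬝ᵥ (M⁻¹ *ᵥ v) := by
    intro v
    have := hMpd.inv.posSemidef.dotProduct_mulVec_nonneg v
    simpa using this
  have hNnn : ∀ v : Fin m → ℝ, 0 ≤ v ⬝ᵥ (M *ᵥ v) := by
    intro v
    have := hMpd.posSemidef.dotProduct_mulVec_nonneg v
    simpa using this
  -- derivatives along lines
  have derivF : ∀ (x w : Fin m → ℝ) (τ₀ : ℝ),
      HasDerivAt (fun τ : ℝ => f (x + τ • w)) (g (x + τ₀ • w) ⬝ᵥ w) τ₀ := by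
    intro x w τ₀
    apply shiftDeriv τ₀
    have h := hgrad (x + τ₀ • w) w
    have e : ∀ τ : ℝ, (x + τ₀ • w) + τ • w = x + (τ₀ + τ) • w := by
      intro τ; rw [add_smul, add_assoc]
    simp only [e] at h
    exact h
  have derivg : ∀ (x w : Fin m → ℝ) (τ₀ : ℝ),
      HasDerivAt (fun τ : ℝ => g (x + τ • w)) (Hess (x + τ₀ • w) *ᵥ w) τ₀ := by
    intro x w τ₀
    apply shiftDeriv τ₀
    have h := hhess (x + τ₀ • w) w
    have e : ∀ τ : ℝ, (x + τ₀ • w) + τ • w = x + (τ₀ + τ) • w := by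
      intro τ; rw [add_smul, add_assoc]
    simp only [e] at h
    exact h
  have derivG : ∀ (x w : Fin m → ℝ) (τ₀ : ℝ),
      HasDerivAt (fun τ : ℝ => g (x + τ • w) ⬝ᵥ w) ((Hess (x + τ₀ • w) *ᵥ w) ⬝ᵥ w) τ₀ := by
    intro x w τ₀
    have h := (hasDerivAt_pi).mp (derivg x w τ₀)
    simp only [dotProduct]
    exact HasDerivAt.fun_sum fun i _ => (h i).mul_const (w i)
  -- Taylor bounds
  have hU : ∀ x w : Fin m → ℝ,
      f (x + w) ≤ f x + g x ⬝ᵥ w + (w ⬝ᵥ (M *ᵥ w)) / 2 := by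
    intro x w
    have := taylor_upper_aux (F := fun τ : ℝ => f (x + τ • w))
      (G := fun τ : ℝ => g (x + τ • w) ⬝ᵥ w)
      (D := fun τ : ℝ => (Hess (x + τ • w) *ᵥ w) ⬝ᵥ w)
      (a := w ⬝ᵥ (M *ᵥ w))
      (fun τ => derivF x w τ) (fun τ => derivG x w τ)
      (fun τ => by
        show (Hess (x + τ • w) *ᵥ w) ⬝ᵥ w ≤ w ⬝ᵥ (M *ᵥ w)
        rw [dotProduct_comm (Hess (x + τ • w) *ᵥ w) w]
        exact hupper (x + τ • w) w)
    simpa using this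
  have hL : ∀ x w : Fin m → ℝ,
      f x + g x ⬝ᵥ w + δ * (w ⬝ᵥ (M *ᵥ w)) / 2 ≤ f (x + w) := by
    intro x w
    have := taylor_lower_aux (F := fun τ : ℝ => f (x + τ • w))
      (G := fun τ : ℝ => g (x + τ • w) ⬝ᵥ w)
      (D := fun τ : ℝ => (Hess (x + τ • w) *ᵥ w) ⬝ᵥ w)
      (b := δ * (w ⬝ᵥ (M *ᵥ w)))
      (fun τ => derivF x w τ) (fun τ => derivG x w τ)
      (fun τ => by
        show δ * (w ⬝ᵥ (M *ᵥ w)) ≤ (Hess (x + τ • w) *ᵥ w) ⬝ᵥ w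
        rw [dotProduct_comm (Hess (x + τ • w) *ᵥ w) w]
        exact hlower (x + τ • w) w)
    simpa using this
  -- gradient vanishes at the minimizer
  have hgstar : g ystar = 0 := by
    have h0 : ∀ v : Fin m → ℝ, g ystar ⬝ᵥ v = 0 := by
      intro v
      refine IsLocalMin.hasDerivAt_eq_zero ?_ (hgrad ystar v)
      refine Filter.Eventually.of_forall (fun τ => ?_)
      simpa using hmin (ystar + τ • v)
    exact dotProduct_self_eq_zero.mp (h0 (g ystar))
  -- shifted function h(v) = f(v) - δ/2 vᵀMv and its gradient
  set h : (Fin m → ℝ) → ℝ := fun v => f v - δ * (v ⬝ᵥ (M *ᵥ v)) / 2 with hh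
  set gh : (Fin m → ℝ) → (Fin m → ℝ) := fun v => g v - δ • (M *ᵥ v) with hgh
  have hexp : ∀ p w : Fin m → ℝ,
      (p + w) ⬝ᵥ (M *ᵥ (p + w))
        = p ⬝ᵥ (M *ᵥ p) + 2 * (p ⬝ᵥ (M *ᵥ w)) + w ⬝ᵥ (M *ᵥ w) := by
    intro p w
    rw [mulVec_add, dotProduct_add, add_dotProduct, add_dotProduct, symmDot hMsymm w p]
    ring
  have hghdot : ∀ p w : Fin m → ℝ, gh p ⬝ᵥ w = g p ⬝ᵥ w - δ * (p ⬝ᵥ (M *ᵥ w)) := by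
    intro p w
    rw [hgh]
    simp only [sub_dotProduct, smul_dotProduct, smul_eq_mul]
    rw [dotProduct_comm (M *ᵥ p) w, symmDot hMsymm w p]
  have hhU : ∀ p w : Fin m → ℝ,
      h (p + w) ≤ h p + gh p ⬝ᵥ w + (1 - δ) * (w ⬝ᵥ (M *ᵥ w)) / 2 := by
    intro p w
    have h1 := hU p w
    have h2 := hexp p w
    have h3 := hghdot p w
    simp only [hh]
    nlinarith [h1, h2, h3]
  have hhL : ∀ p w : Fin m → ℝ, h p + gh p ⬝ᵥ w ≤ h (p + w) := by
    intro p w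
    have h1 := hL p w
    have h2 := hexp p w
    have h3 := hghdot p w
    simp only [hh]
    nlinarith [h1, h2, h3]
  -- co-coercivity half-step
  have cocoA : ∀ p z : Fin m → ℝ,
      h p + gh p ⬝ᵥ (z - p)
        + ((gh z - gh p) ⬝ᵥ (M⁻¹ *ᵥ (gh z - gh p))) / (2 * (1 - δ)) ≤ h z := by
    intro p z
    set d : Fin m → ℝ := gh z - gh p with hd
    set u : Fin m → ℝ := z - (1 / (1 - δ)) • (M⁻¹ *ᵥ d) with hu
    set Q' : ℝ := d ⬝ᵥ (M⁻¹ *ᵥ d) with hQ'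
    have hA : h p + gh p ⬝ᵥ (u - p) ≤ h u := by
      have := hhL p (u - p)
      rwa [add_sub_cancel] at this
    have hB : h u ≤ h z + gh z ⬝ᵥ (u - z)
        + (1 - δ) * ((u - z) ⬝ᵥ (M *ᵥ (u - z))) / 2 := by
      have := hhU z (u - z)
      rwa [add_sub_cancel] at this
    have huz : u - z = -((1 / (1 - δ)) • (M⁻¹ *ᵥ d)) := by
      rw [hu]; abel
    have hN : (u - z) ⬝ᵥ (M *ᵥ (u - z)) = (1 / (1 - δ))^2 * Q' := by
      rw [huz, neg_dotProduct, mulVec_neg, dotProduct_neg, neg_neg, smul_dotProduct,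
        mulVec_smul, dotProduct_smul, hMinv', dotProduct_comm (M⁻¹ *ᵥ d) d,
        smul_eq_mul, smul_eq_mul, ← hQ']
      ring
    have hzu : gh z ⬝ᵥ (u - z) = -(1 / (1 - δ)) * (gh z ⬝ᵥ (M⁻¹ *ᵥ d)) := by
      rw [huz, dotProduct_neg, dotProduct_smul, smul_eq_mul]
      ring
    have hpu : gh p ⬝ᵥ (u - p) = gh p ⬝ᵥ (z - p) - (1 / (1 - δ)) * (gh p ⬝ᵥ (M⁻¹ *ᵥ d)) := by
      have : u - p = (z - p) + -((1 / (1 - δ)) • (M⁻¹ *ᵥ d)) := by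
        rw [hu]; abel
      rw [this, dotProduct_add, dotProduct_neg, dotProduct_smul, smul_eq_mul]
      ring
    have hdd : gh z ⬝ᵥ (M⁻¹ *ᵥ d) - gh p ⬝ᵥ (M⁻¹ *ᵥ d) = Q' := by
      rw [hQ', hd, ← sub_dotProduct]
    have hkey : ∀ X : ℝ, (1 - δ) * ((1 / (1 - δ)) ^ 2 * X) / 2 = (1 / (1 - δ)) * X / 2 := by
      intro X
      field_simp
    have hkey2 : ∀ X : ℝ, X / (2 * (1 - δ)) = (1 / (1 - δ)) * X / 2 := by
      intro X
      rw [div_mul_eq_mul_div, one_mul, div_div, div_eq_div_iff (by positivity) (by positivity)]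
      ring
    rw [hzu, hN, hkey Q'] at hB
    rw [hpu] at hA
    have hdd2 : (1 / (1 - δ)) * (gh z ⬝ᵥ (M⁻¹ *ᵥ d)) - (1 / (1 - δ)) * (gh p ⬝ᵥ (M⁻¹ *ᵥ d))
        = (1 / (1 - δ)) * Q' := by
      rw [← mul_sub, hdd]
    rw [hkey2 Q']
    linarith [hA, hB, hdd2]
  -- full co-coercivity
  have coco : ∀ p z : Fin m → ℝ,
      ((gh z - gh p) ⬝ᵥ (M⁻¹ *ᵥ (gh z - gh p))) / (1 - δ)
        ≤ (gh z - gh p) ⬝ᵥ (z - p) := by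
    intro p z
    have h1 := cocoA p z
    have h2 := cocoA z p
    have e1 : gh p - gh z = -(gh z - gh p) := by abel
    have e2 : p - z = -(z - p) := by abel
    rw [e1, e2] at h2
    simp only [neg_dotProduct, dotProduct_neg, mulVec_neg, neg_neg] at h2
    have e3 : (gh z - gh p) ⬝ᵥ (z - p) = gh z ⬝ᵥ (z - p) - gh p ⬝ᵥ (z - p) := by
      rw [sub_dotProduct]
    have e4 : ∀ X : ℝ, X / (1 - δ) = 2 * (X / (2 * (1 - δ))) := by
      intro X
      field_simp
    rw [e3, e4 ((gh z - gh p) ⬝ᵥ (M⁻¹ *ᵥ (gh z - gh p)))]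
    linarith [h1, h2]
  -- generalized expansion identities
  have expandQ : ∀ a b : Fin m → ℝ,
      (a - δ • (M *ᵥ b)) ⬝ᵥ (M⁻¹ *ᵥ (a - δ • (M *ᵥ b)))
        = a ⬝ᵥ (M⁻¹ *ᵥ a) - 2 * δ * (a ⬝ᵥ b) + δ ^ 2 * (b ⬝ᵥ (M *ᵥ b)) := by
    intro a b
    have s1 : (M *ᵥ b) ⬝ᵥ (M⁻¹ *ᵥ a) = a ⬝ᵥ b := by
      rw [symmDot hMinvsymm, hMinv]
    have s2 : (M *ᵥ b) ⬝ᵥ b = b ⬝ᵥ (M *ᵥ b) := dotProduct_comm _ _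
    simp only [mulVec_sub, mulVec_smul, hMinv, sub_dotProduct, dotProduct_sub,
      smul_dotProduct, dotProduct_smul, smul_eq_mul, s1, s2]
    ring
  have expand2 : ∀ a b : Fin m → ℝ,
      (a - δ • (M *ᵥ b)) ⬝ᵥ b = a ⬝ᵥ b - δ * (b ⬝ᵥ (M *ᵥ b)) := by
    intro a b
    have s2 : (M *ᵥ b) ⬝ᵥ b = b ⬝ᵥ (M *ᵥ b) := dotProduct_comm _ _
    simp only [sub_dotProduct, smul_dotProduct, smul_eq_mul, s2]
  have expandE : ∀ a b : Fin m → ℝ,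
      (b - M⁻¹ *ᵥ a) ⬝ᵥ (M *ᵥ (b - M⁻¹ *ᵥ a))
        = b ⬝ᵥ (M *ᵥ b) - 2 * (a ⬝ᵥ b) + a ⬝ᵥ (M⁻¹ *ᵥ a) := by
    intro a b
    have s3 : (M⁻¹ *ᵥ a) ⬝ᵥ (M *ᵥ b) = a ⬝ᵥ b := by
      rw [symmDot hMsymm, hMinv', dotProduct_comm]
    have s4 : b ⬝ᵥ a = a ⬝ᵥ b := dotProduct_comm _ _
    have s5 : (M⁻¹ *ᵥ a) ⬝ᵥ a = a ⬝ᵥ (M⁻¹ *ᵥ a) := dotProduct_comm _ _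
    simp only [mulVec_sub, hMinv', sub_dotProduct, dotProduct_sub, s3, s4, s5]
    ring
  -- coercivity at an arbitrary point p relative to ystar
  have hcoer : ∀ p : Fin m → ℝ,
      g p ⬝ᵥ (M⁻¹ *ᵥ g p) + δ * ((p - ystar) ⬝ᵥ (M *ᵥ (p - ystar)))
        ≤ (1 + δ) * (g p ⬝ᵥ (p - ystar)) := by
    intro p
    have hdeq : gh p - gh ystar = g p - δ • (M *ᵥ (p - ystar)) := by
      simp only [hgh, hgstar, mulVec_sub, smul_sub, zero_sub, sub_neg_eq_add]
      abel
    have h1 := coco ystar p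
    rw [hdeq, expandQ (g p) (p - ystar), expand2 (g p) (p - ystar),
      div_le_iff₀ h1mδ] at h1
    nlinarith [h1]
  -- the one-step contraction
  have main : ∀ ℓ : ℕ,
      (y (ℓ + 1) - ystar) ⬝ᵥ (M *ᵥ (y (ℓ + 1) - ystar))
        ≤ ((1 - δ) / (1 + δ)) * ((y ℓ - ystar) ⬝ᵥ (M *ᵥ (y ℓ - ystar))) := by
    intro ℓ
    have hstep : y (ℓ + 1) - ystar = (y ℓ - ystar) - M⁻¹ *ᵥ g (y ℓ) := by
      rw [hiter ℓ]; abel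
    have hc := hcoer (y ℓ)
    rw [hstep, expandE (g (y ℓ)) (y ℓ - ystar), div_mul_eq_mul_div, le_div_iff₀ h1δ]
    nlinarith [hc, hQnn (g (y ℓ)), hNnn (y ℓ - ystar), hδ0.le, hδ1.le]
  refine ⟨main, ?_⟩
  intro ℓ
  induction ℓ with
  | zero => simp
  | succ n ih =>
    have hr : (0:ℝ) ≤ (1 - δ) / (1 + δ) := div_nonneg (by linarith) (by linarith)
    calc (y (n + 1) - ystar) ⬝ᵥ (M *ᵥ (y (n + 1) - ystar))
        ≤ ((1 - δ) / (1 + δ)) * ((y n - ystar) ⬝ᵥ (M *ᵥ (y n - ystar))) := main n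
      _ ≤ ((1 - δ) / (1 + δ)) * (((1 - δ) / (1 + δ)) ^ n
            * ((y 0 - ystar) ⬝ᵥ (M *ᵥ (y 0 - ystar)))) :=
          mul_le_mul_of_nonneg_left ih hr
      _ = ((1 - δ) / (1 + δ)) ^ (n + 1) * ((y 0 - ystar) ⬝ᵥ (M *ᵥ (y 0 - ystar))) := by
          ring
end

section
/- Fix μ>0, ρ>0, a ∈ ℝ^m (a column of A), c_i ∈ ℝ. Suppose y* ∈ ℝ^m and x_i* ≥ 0 satisfy complementarity x_i*(c_i − a^T y*) = 0 with c_i − a^T y* ≥ 0. Let t* = ρ x_i* − c_i + a^T y* and z_i* = (sqrt((t*)² + 4ρμ) + t*)/2. Then ρ x_i* ≤ z_i* ≤ ρ x_i* + sqrt(ρμ). -/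
open Matrix

theorem stmt11 {m : ℕ} (μ ρ : ℝ) (hμ : 0 < μ) (hρ : 0 < ρ)
    (a ystar : Fin m → ℝ) (ci xi : ℝ) (hxi : 0 ≤ xi)
    (hfeas : 0 ≤ ci - a ⬝ᵥ ystar) (hcomp : xi * (ci - a ⬝ᵥ ystar) = 0) :
    ρ * xi ≤ (Real.sqrt ((ρ * xi - ci + a ⬝ᵥ ystar) ^ 2 + 4 * ρ * μ)
        + (ρ * xi - ci + a ⬝ᵥ ystar)) / 2 ∧
    (Real.sqrt ((ρ * xi - ci + a ⬝ᵥ ystar) ^ 2 + 4 * ρ * μ)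
        + (ρ * xi - ci + a ⬝ᵥ ystar)) / 2 ≤ ρ * xi + Real.sqrt (ρ * μ) := by
  set s : ℝ := ci - a ⬝ᵥ ystar with hs
  have ht : ρ * xi - ci + a ⬝ᵥ ystar = ρ * xi - s := by rw [hs]; ring
  rw [ht]
  have hxs : xi * s = 0 := hcomp
  have hnn : 0 ≤ ρ * xi + s := by
    have : 0 ≤ ρ * xi := mul_nonneg hρ.le hxi
    linarith
  have hsq : (ρ * xi - s) ^ 2 = (ρ * xi + s) ^ 2 := by nlinarith [hxs]
  have hsrnn : 0 ≤ Real.sqrt (ρ * μ) := Real.sqrt_nonneg _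
  have hsr : Real.sqrt (ρ * μ) ^ 2 = ρ * μ := Real.sq_sqrt (by positivity)
  constructor
  · have h1 : ρ * xi + s ≤ Real.sqrt ((ρ * xi - s) ^ 2 + 4 * ρ * μ) := by
      rw [hsq]
      calc ρ * xi + s = Real.sqrt ((ρ * xi + s) ^ 2) := (Real.sqrt_sq hnn).symm
        _ ≤ _ := Real.sqrt_le_sqrt (by nlinarith)
    linarith
  · have h2 : Real.sqrt ((ρ * xi - s) ^ 2 + 4 * ρ * μ)
        ≤ ρ * xi + s + 2 * Real.sqrt (ρ * μ) := by
      rw [hsq]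
      have hle : (ρ * xi + s) ^ 2 + 4 * ρ * μ
          ≤ (ρ * xi + s + 2 * Real.sqrt (ρ * μ)) ^ 2 := by nlinarith
      have := Real.sqrt_le_sqrt hle
      rwa [Real.sqrt_sq (by positivity)] at this
    linarith
end

section
/- Fix μ > 0, x_i ∈ ℝ, c_i − a^T y ∈ ℝ. Define for ρ > 0: r(ρ) = s(ρ) − (c_i − a^T y) where s(ρ) = (sqrt((ρ x_i − c_i + a^T y)² + 4ρμ) − (ρ x_i − c_i + a^T y))/2. Then ∂(r(ρ)²)/∂ρ = (2/ρ)·(s/(s+z))·r(ρ)², where z(ρ) = (sqrt((ρx_i − c_i + a^Ty)² + 4ρμ) + (ρx_i − c_i + a^Ty))/2; in particular if r(ρ) ≠ 0 then r(ρ)² is strictly increasing in ρ, so the squared constraint residual decreases as ρ decreases. -/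
theorem stmt14 (μ xi w : ℝ) (hμ : 0 < μ)
    (t s z r : ℝ → ℝ)
    (ht : ∀ ρ : ℝ, t ρ = ρ * xi - w)
    (hs : ∀ ρ : ℝ, s ρ = (Real.sqrt (t ρ ^ 2 + 4 * ρ * μ) - t ρ) / 2)
    (hz : ∀ ρ : ℝ, z ρ = (Real.sqrt (t ρ ^ 2 + 4 * ρ * μ) + t ρ) / 2)
    (hr : ∀ ρ : ℝ, r ρ = s ρ - w) :
    (∀ ρ : ℝ, 0 < ρ →
      HasDerivAt (fun ρ' => r ρ' ^ 2) ((2 / ρ) * (s ρ / (s ρ + z ρ)) * r ρ ^ 2) ρ) ∧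
    ((∀ ρ : ℝ, 0 < ρ → r ρ ≠ 0) →
      StrictMonoOn (fun ρ => r ρ ^ 2) (Set.Ioi 0)) := by
  have hfun : (fun ρ' => r ρ' ^ 2)
      = fun ρ' => ((Real.sqrt ((ρ' * xi - w) ^ 2 + 4 * ρ' * μ) - (ρ' * xi - w)) / 2 - w) ^ 2 := by
    funext ρ'; rw [hr, hs, ht]
  have key : ∀ ρ : ℝ, 0 < ρ →
      HasDerivAt (fun ρ' => r ρ' ^ 2) ((2 / ρ) * (s ρ / (s ρ + z ρ)) * r ρ ^ 2) ρ := by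
    intro ρ hρ
    have hD : 0 < (ρ * xi - w) ^ 2 + 4 * ρ * μ := by positivity
    set q := Real.sqrt ((ρ * xi - w) ^ 2 + 4 * ρ * μ) with hqdef
    have hq : 0 < q := Real.sqrt_pos.mpr hD
    have hq2 : q ^ 2 = (ρ * xi - w) ^ 2 + 4 * ρ * μ := Real.sq_sqrt hD.le
    have h1 : HasDerivAt (fun ρ' : ℝ => (ρ' * xi - w) ^ 2 + 4 * ρ' * μ)
        (2 * (ρ * xi - w) * xi + 4 * μ) ρ := by
      have ha : HasDerivAt (fun ρ' : ℝ => ρ' * xi - w) xi ρ := by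
        simpa using ((hasDerivAt_id ρ).mul_const xi).sub_const w
      have hb : HasDerivAt (fun ρ' : ℝ => (ρ' * xi - w) ^ 2)
          (2 * (ρ * xi - w) * xi) ρ := by
        have h2 := ha.pow 2
        norm_num at h2
        exact h2
      have hc : HasDerivAt (fun ρ' : ℝ => 4 * ρ' * μ) (4 * μ) ρ := by
        have h := (hasDerivAt_id ρ).const_mul (4 : ℝ)
        have h2 := h.mul_const μ
        simpa using h2
      exact hb.add hc
    have hsqrt : HasDerivAt (fun ρ' : ℝ => Real.sqrt ((ρ' * xi - w) ^ 2 + 4 * ρ' * μ))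
        ((2 * (ρ * xi - w) * xi + 4 * μ) / (2 * q)) ρ := h1.sqrt hD.ne'
    have ha : HasDerivAt (fun ρ' : ℝ => ρ' * xi - w) xi ρ := by
      simpa using ((hasDerivAt_id ρ).mul_const xi).sub_const w
    have hrd : HasDerivAt
        (fun ρ' => (Real.sqrt ((ρ' * xi - w) ^ 2 + 4 * ρ' * μ) - (ρ' * xi - w)) / 2 - w)
        (((2 * (ρ * xi - w) * xi + 4 * μ) / (2 * q) - xi) / 2) ρ :=
      ((hsqrt.sub ha).div_const 2).sub_const w
    have hfinal : HasDerivAt (fun ρ' => r ρ' ^ 2)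
        (2 * ((q - (ρ * xi - w)) / 2 - w)
          * (((2 * (ρ * xi - w) * xi + 4 * μ) / (2 * q) - xi) / 2)) ρ := by
      rw [hfun]
      have h := hrd.pow 2
      norm_num at h
      exact h.congr_deriv (by ring)
    convert hfinal using 1
    have hsρ : s ρ = (q - (ρ * xi - w)) / 2 := by rw [hs, ht]
    have hzρ : z ρ = (q + (ρ * xi - w)) / 2 := by rw [hz, ht]
    have hrρ : r ρ = (q - (ρ * xi - w)) / 2 - w := by rw [hr, hsρ]
    rw [hsρ, hzρ, hrρ]
    have hkey : ρ * ((ρ * xi - w) * xi + 2 * μ - xi * q)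
        = (q - (ρ * xi - w)) * ((q - (ρ * xi - w)) / 2 - w) := by
      linear_combination (-(1:ℝ)/2) * hq2
    have hρ' : ρ ≠ 0 := hρ.ne'
    have hq' : q ≠ 0 := hq.ne'
    field_simp
    rw [show q - (ρ * xi - w) + (q + (ρ * xi - w)) = 2 * q by ring, div_eq_iff (by positivity)]
    linear_combination (2 * q * (q - (ρ * xi - w) - 2 * w)) * hq2
  refine ⟨key, ?_⟩
  intro hrne
  apply strictMonoOn_of_deriv_pos (convex_Ioi 0)
  · intro ρ hρ
    exact ((key ρ hρ).differentiableAt).continuousAt.continuousWithinAt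
  · intro ρ hρ
    rw [interior_Ioi] at hρ
    have hρ0 : 0 < ρ := hρ
    rw [(key ρ hρ0).deriv]
    have hD : 0 < (ρ * xi - w) ^ 2 + 4 * ρ * μ := by positivity
    set q := Real.sqrt ((ρ * xi - w) ^ 2 + 4 * ρ * μ) with hqdef
    have hq : 0 < q := Real.sqrt_pos.mpr hD
    have hq2 : q ^ 2 = (ρ * xi - w) ^ 2 + 4 * ρ * μ := Real.sq_sqrt hD.le
    have hsρ : s ρ = (q - (ρ * xi - w)) / 2 := by rw [hs, ht]
    have hzρ : z ρ = (q + (ρ * xi - w)) / 2 := by rw [hz, ht]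
    have htq : ρ * xi - w < q := by nlinarith [mul_pos hρ hμ]
    have hspos : 0 < s ρ := by rw [hsρ]; linarith
    have hszpos : 0 < s ρ + z ρ := by rw [hsρ, hzρ]; linarith
    have hrpos : 0 < r ρ ^ 2 := by
      have := hrne ρ hρ0
      positivity
    exact mul_pos (mul_pos (by positivity) (div_pos hspos hszpos)) hrpos
end
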